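/- Let n ≥ 11, 1 ≤ d ≤ n−1, and let λ = (λ₁ < ... < λ_t) be an unrefinable partition of T_n − d. If d is not a part of λ, then λ_t ≤ 2n − 4. -/

import Mathlib

/-- The n-th triangular number. -/
def T (n : ℕ) : ℕ := n * (n + 1) / 2

/-- A partition of `N` into distinct parts, represented as a finite set of
positive integers with at least two elements summing to `N`. -/
def DistinctPartition (N : ℕ) (S : Finset ℕ) : Prop :=
  (∀ x ∈ S, 0 < x) ∧ 2 ≤ S.card ∧ S.sum id = N

/-- The missing parts: integers in `{1, …, λ_t}` not appearing in the partition. -/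
def Missing (S : Finset ℕ) : Finset ℕ := Finset.Icc 1 (S.sup id) \ S

/-- No part is the sum of two distinct missing parts. -/
def Unrefinable (S : Finset ℕ) : Prop :=
  ∀ a ∈ Missing S, ∀ b ∈ Missing S, a ≠ b → a + b ∉ S

def UnrefinablePartition (N : ℕ) (S : Finset ℕ) : Prop :=
  DistinctPartition N S ∧ Unrefinable S

/-- A maximal unrefinable partition: its largest part is maximal among the
largest parts of all unrefinable partitions of `N`. -/
def MaximalUnrefinable (N : ℕ) (S : Finset ℕ) : Prop :=
  UnrefinablePartition N S ∧
    ∀ S' : Finset ℕ, UnrefinablePartition N S' → S'.sup id ≤ S.sup id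

lemma Ttwo (k : ℕ) : 2 * T k = k * (k + 1) :=
  Nat.mul_div_cancel' (Nat.even_mul_succ_self k).two_dvd

lemma Tsucc (k : ℕ) : T (k + 1) = T k + (k + 1) := by
  have h1 := Ttwo k
  have h2 := Ttwo (k + 1)
  have h3 : (k + 1) * (k + 1 + 1) = k * (k + 1) + 2 * (k + 1) := by ring
  omega

lemma Tmono {a b : ℕ} (h : a ≤ b) : T a ≤ T b :=
  Nat.div_le_div_right (Nat.mul_le_mul h (by omega))

lemma sum_Icc1 (k : ℕ) : ∑ i ∈ Finset.Icc 1 k, i = T k := by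
  induction k with
  | zero => simp [T]
  | succ k ih =>
    rw [Finset.sum_Icc_succ_top (by omega), ih, Tsucc]

theorem bound_d_not_mem (n d : ℕ) (hn : 11 ≤ n) (hd1 : 1 ≤ d) (hd2 : d ≤ n - 1)
    (S : Finset ℕ) (h : UnrefinablePartition (T n - d) S) (hdS : d ∉ S) :
    S.sup id ≤ 2 * n - 4 := by
  by_contra hcon
  push_neg at hcon
  obtain ⟨⟨hpos, hcard, hsum⟩, hunref⟩ := h
  set m := S.sup id with hm
  have hm3 : 2 * n - 3 ≤ m := by omega
  have hne : S.Nonempty := Finset.card_pos.mp (by omega)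
  obtain ⟨b, hbS, hbm⟩ := Finset.exists_mem_eq_sup S hne id
  have hmS : m ∈ S := by rw [hm, hbm]; exact hbS
  have hSsub : S ⊆ Finset.Icc 1 m := fun x hx =>
    Finset.mem_Icc.mpr ⟨hpos x hx, Finset.le_sup (f := id) hx⟩
  set M := Finset.Icc 1 m \ S with hMdef
  have hsplit : ∑ x ∈ M, x + ∑ x ∈ S, x = ∑ x ∈ Finset.Icc 1 m, x :=
    Finset.sum_sdiff hSsub
  have hTm : ∑ x ∈ Finset.Icc 1 m, x = T m := sum_Icc1 m
  have hTn2 : 2 * T n = n * (n + 1) := Ttwo n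
  have hnTn : n ≤ T n := by nlinarith [hTn2]
  have hSid : S.sum id = ∑ x ∈ S, x := rfl
  have hsum' : ∑ x ∈ S, x + d = T n := by
    rw [← hSid, hsum]; omega
  have hdM : d ∈ M := Finset.mem_sdiff.mpr ⟨Finset.mem_Icc.mpr ⟨hd1, by omega⟩, hdS⟩
  have hunref' : ∀ a ∈ M, ∀ b ∈ M, a ≠ b → a + b ∉ S := hunref
  have hpair : ∀ x ∈ M, ∀ y ∈ M, x ≠ y → x + y ≠ m := by
    intro x hx y hy hxy hxym
    exact hunref' x hx y hy hxy (hxym ▸ hmS)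
  set q := (m + 1) / 2 with hq
  have hMbound : ∀ x ∈ M, 1 ≤ x ∧ x ≤ m - 1 := by
    intro x hx
    obtain ⟨hxi, hxS⟩ := Finset.mem_sdiff.mp hx
    obtain ⟨h1, h2⟩ := Finset.mem_Icc.mp hxi
    have : x ≠ m := fun he => hxS (he ▸ hmS)
    omega
  set φ : ℕ → ℕ := fun x => if q ≤ x then x else m - x with hφ
  have hφmem : ∀ x ∈ M, φ x ∈ Finset.Icc q (m - 1) := by
    intro x hx
    have hb := hMbound x hx
    simp only [hφ]
    split <;> (rw [Finset.mem_Icc]; omega)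
  have hφinj : ∀ x ∈ M, ∀ y ∈ M, φ x = φ y → x = y := by
    intro x hx y hy hxy
    have hbx := hMbound x hx
    have hby := hMbound y hy
    simp only [hφ] at hxy
    by_cases h1 : q ≤ x <;> by_cases h2 : q ≤ y <;>
      simp only [h1, h2, if_pos, if_neg, if_true, if_false] at hxy
    · exact hxy
    · exfalso
      exact hpair x hx y hy (by omega) (by omega)
    · exfalso
      exact hpair x hx y hy (by omega) (by omega)
    · omega
  have himg : ∑ x ∈ M, φ x ≤ ∑ x ∈ Finset.Icc q (m - 1), x := by
    calc ∑ x ∈ M, φ x = ∑ x ∈ Finset.image φ M, x :=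
          (Finset.sum_image (f := fun x => x) hφinj).symm
      _ ≤ ∑ x ∈ Finset.Icc q (m - 1), x :=
          Finset.sum_le_sum_of_subset (fun y hy => by
            obtain ⟨x, hx, rfl⟩ := Finset.mem_image.mp hy
            exact hφmem x hx)
  set g : ℕ := if 2 * d < m then m - 2 * d else 0 with hg
  have hle : ∀ x ∈ M, x ≤ φ x := by
    intro x hx
    have hb := hMbound x hx
    simp only [hφ]
    split <;> omega
  have hMg : ∑ x ∈ M, x + g ≤ ∑ x ∈ M, φ x := by
    by_cases hdd : 2 * d < m
    · have hgv : g = m - 2 * d := if_pos hdd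
      have hφd : φ d = m - d := by simp only [hφ]; rw [if_neg (by omega)]
      have e1 := Finset.add_sum_erase M φ hdM
      have e2 := Finset.add_sum_erase M (fun x => x) hdM
      have hrest : ∑ x ∈ M.erase d, x ≤ ∑ x ∈ M.erase d, φ x :=
        Finset.sum_le_sum (fun x hx => hle x (Finset.mem_of_mem_erase hx))
      omega
    · have hgv : g = 0 := if_neg hdd
      rw [hgv, add_zero]
      exact Finset.sum_le_sum hle
  have hq1 : 1 ≤ q := by omega
  have hqm : q - 1 ≤ m - 1 := by omega
  have hSq : ∑ x ∈ Finset.Icc q (m - 1), x + T (q - 1) = T (m - 1) := by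
    have hcons := Finset.sum_Ioc_consecutive (fun i => i) (Nat.zero_le (q - 1)) hqm
    have e1 : Finset.Ioc 0 (q - 1) = Finset.Icc 1 (q - 1) := (Finset.Icc_add_one_left_eq_Ioc 0 (q - 1)).symm
    have e2 : Finset.Ioc 0 (m - 1) = Finset.Icc 1 (m - 1) := (Finset.Icc_add_one_left_eq_Ioc 0 (m - 1)).symm
    have e3 : Finset.Ioc (q - 1) (m - 1) = Finset.Icc q (m - 1) := by
      rw [← Finset.Icc_add_one_left_eq_Ioc]
      congr 1
      omega
    simp only [e1, e2, e3, sum_Icc1] at hcons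
    omega
  have hTm1 : T (m - 1) + m = T m := by
    have := Tsucc (m - 1)
    have hm1 : m - 1 + 1 = m := by omega
    rw [hm1] at this
    omega
  -- arithmetic conclusion
  have hq2 : n - 1 ≤ q := by omega
  have hTqmono : T (n - 2) ≤ T (q - 1) := Tmono (by omega)
  have hTnd : T n = T (n - 2) + (2 * n - 1) := by
    obtain ⟨k, rfl⟩ : ∃ k, n = k + 2 := ⟨n - 2, by omega⟩
    have ht1 : T (k + 2) = T (k + 1) + (k + 2) := Tsucc (k + 1)
    have ht2 : T (k + 1) = T k + (k + 1) := Tsucc k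
    have h0 : k + 2 - 2 = k := by omega
    rw [h0]
    omega
  have hgcase : (2 * d < m ∧ g + 2 * d = m) ∨ (m ≤ 2 * d ∧ g = 0) := by
    by_cases hdd : 2 * d < m
    · left; refine ⟨hdd, ?_⟩; rw [hg, if_pos hdd]; omega
    · right; exact ⟨by omega, if_neg hdd⟩
  omega
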